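/- For every instance of problem P with nonnegative utility function u : L → ℝ (i.e., u(ℓ) ≥ 0 for all ℓ ∈ L), the set S = IDAssign(u, L) returned by the algorithm is a feasible subset of L and satisfies u(S) ≥ (1/6)·u(Q) for every feasible subset Q ⊆ L. In particular, IDAssign is a 1/6-approximation algorithm for problem P. -/

import Mathlib

def Feasible {L J K : Type*} [DecidableEq L] [DecidableEq J] [DecidableEq K]
    (b c : L → ℝ) (job : L → J) (es : L → K) (S : Finset L) : Prop :=
  (∀ k : K, ∑ ℓ ∈ S.filter (fun ℓ => es ℓ = k), b ℓ ≤ 1) ∧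
  (∀ k : K, ∑ ℓ ∈ S.filter (fun ℓ => es ℓ = k), c ℓ ≤ 1) ∧
  (∀ j : J, (S.filter (fun ℓ => job ℓ = j)).card ≤ 1)

def decompose {L J K : Type*} [DecidableEq J] [DecidableEq K]
    (b c : L → ℝ) (job : L → J) (es : L → K) (w : L → ℝ) (ℓstar : L) (ℓ : L) : ℝ :=
  if job ℓ = job ℓstar then w ℓstar
  else if es ℓ = es ℓstar then w ℓstar * (b ℓ + c ℓ)
  else 0

/-- Pick an instance of `S` minimizing `max (b ℓ) (c ℓ)` among the light
instances of `S` if `S` contains a light instance, and among all instances of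
`S` otherwise. -/
noncomputable def pick {L : Type*} (b c : L → ℝ) (S : Finset L) (hS : S.Nonempty) : L :=
  if h : (S.filter fun ℓ => b ℓ ≤ 1 / 2 ∧ c ℓ ≤ 1 / 2).Nonempty then
    (Finset.exists_min_image _ (fun ℓ => max (b ℓ) (c ℓ)) h).choose
  else
    (Finset.exists_min_image S (fun ℓ => max (b ℓ) (c ℓ)) hS).choose

theorem pick_mem {L : Type*} (b c : L → ℝ) (S : Finset L) (hS : S.Nonempty) :
    pick b c S hS ∈ S := by
  unfold pick
  split
  · next h =>
      exact Finset.filter_subset _ _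
        (Finset.exists_min_image _ (fun ℓ => max (b ℓ) (c ℓ)) h).choose_spec.1
  · next h =>
      exact (Finset.exists_min_image S (fun ℓ => max (b ℓ) (c ℓ)) hS).choose_spec.1

open scoped Classical in
noncomputable def IDAssign {L J K : Type*} [DecidableEq L] [DecidableEq J] [DecidableEq K]
    (b c : L → ℝ) (job : L → J) (es : L → K) (w : L → ℝ) (S : Finset L) : Finset L :=
  if hS' : (S.filter fun ℓ => 0 < w ℓ).Nonempty then
    let ℓstar := pick b c (S.filter fun ℓ => 0 < w ℓ) hS'
    let Srec := IDAssign b c job es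
      (fun ℓ => w ℓ - decompose b c job es w ℓstar ℓ)
      (S.filter fun ℓ => 0 < w ℓ)
    if Feasible b c job es (insert ℓstar Srec) then insert ℓstar Srec else Srec
  else ∅
termination_by (S.filter fun ℓ => 0 < w ℓ).card
decreasing_by
  apply Finset.card_lt_card
  rw [Finset.ssubset_iff_of_subset (Finset.filter_subset _ _)]
  refine ⟨ℓstar, pick_mem _ _ _ _, ?_⟩
  simp [decompose, ℓstar]

open scoped Classical in
lemma IDAssign_pos {L J K : Type*} [DecidableEq L] [DecidableEq J] [DecidableEq K]
    (b c : L → ℝ) (job : L → J) (es : L → K) (w : L → ℝ) (S : Finset L)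
    (hS' : (S.filter fun ℓ => 0 < w ℓ).Nonempty) :
    IDAssign b c job es w S =
      if Feasible b c job es (insert (pick b c (S.filter fun ℓ => 0 < w ℓ) hS')
          (IDAssign b c job es
            (fun ℓ => w ℓ - decompose b c job es w (pick b c (S.filter fun ℓ => 0 < w ℓ) hS') ℓ)
            (S.filter fun ℓ => 0 < w ℓ)))
      then insert (pick b c (S.filter fun ℓ => 0 < w ℓ) hS')
          (IDAssign b c job es
            (fun ℓ => w ℓ - decompose b c job es w (pick b c (S.filter fun ℓ => 0 < w ℓ) hS') ℓ)
            (S.filter fun ℓ => 0 < w ℓ))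
      else (IDAssign b c job es
            (fun ℓ => w ℓ - decompose b c job es w (pick b c (S.filter fun ℓ => 0 < w ℓ) hS') ℓ)
            (S.filter fun ℓ => 0 < w ℓ)) := by
  rw [IDAssign, dif_pos hS']

lemma IDAssign_neg {L J K : Type*} [DecidableEq L] [DecidableEq J] [DecidableEq K]
    (b c : L → ℝ) (job : L → J) (es : L → K) (w : L → ℝ) (S : Finset L)
    (hS' : ¬ (S.filter fun ℓ => 0 < w ℓ).Nonempty) :
    IDAssign b c job es w S = ∅ := by
  rw [IDAssign, dif_neg hS']

lemma pick_light {L : Type*} (b c : L → ℝ) (S : Finset L) (hS : S.Nonempty)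
    (h : (S.filter fun ℓ => b ℓ ≤ 1 / 2 ∧ c ℓ ≤ 1 / 2).Nonempty) :
    b (pick b c S hS) ≤ 1 / 2 ∧ c (pick b c S hS) ≤ 1 / 2 := by
  unfold pick
  rw [dif_pos h]
  exact (Finset.mem_filter.mp
    (Finset.exists_min_image _ (fun ℓ => max (b ℓ) (c ℓ)) h).choose_spec.1).2

lemma decompose_nonneg {L J K : Type*} [DecidableEq J] [DecidableEq K]
    (b c : L → ℝ) (job : L → J) (es : L → K)
    (hb : ∀ ℓ : L, 0 < b ℓ ∧ b ℓ ≤ 1) (hc : ∀ ℓ : L, 0 < c ℓ ∧ c ℓ ≤ 1)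
    (w : L → ℝ) (ℓs : L) (hw : 0 ≤ w ℓs) (ℓ : L) :
    0 ≤ decompose b c job es w ℓs ℓ := by
  unfold decompose
  split_ifs
  · exact hw
  · exact mul_nonneg hw (by linarith [(hb ℓ).1, (hc ℓ).1])
  · exact le_refl 0

/-- B1: bound on decomposed weight of any feasible set. -/
lemma sum_decompose_le {L J K : Type*} [DecidableEq L] [DecidableEq J] [DecidableEq K]
    (b c : L → ℝ) (job : L → J) (es : L → K)
    (hb : ∀ ℓ : L, 0 < b ℓ ∧ b ℓ ≤ 1) (hc : ∀ ℓ : L, 0 < c ℓ ∧ c ℓ ≤ 1)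
    (w : L → ℝ) (ℓs : L) (hw : 0 ≤ w ℓs)
    (Q : Finset L) (hQ : Feasible b c job es Q) :
    ∑ ℓ ∈ Q, decompose b c job es w ℓs ℓ ≤ 3 * w ℓs := by
  have hpt : ∀ ℓ ∈ Q, decompose b c job es w ℓs ℓ ≤
      (if job ℓ = job ℓs then w ℓs else 0) +
      (if es ℓ = es ℓs then w ℓs * (b ℓ + c ℓ) else 0) := by
    intro ℓ _
    unfold decompose
    have h1 : 0 ≤ w ℓs * (b ℓ + c ℓ) :=
      mul_nonneg hw (by linarith [(hb ℓ).1, (hc ℓ).1])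
    split_ifs <;> simp <;> linarith
  have h1 : ∑ ℓ ∈ Q, (if job ℓ = job ℓs then w ℓs else 0) ≤ w ℓs := by
    rw [← Finset.sum_filter, Finset.sum_const, nsmul_eq_mul]
    have hcard := hQ.2.2 (job ℓs)
    have : ((Q.filter (fun ℓ => job ℓ = job ℓs)).card : ℝ) ≤ 1 := by
      exact_mod_cast hcard
    nlinarith
  have h2 : ∑ ℓ ∈ Q, (if es ℓ = es ℓs then w ℓs * (b ℓ + c ℓ) else 0) ≤ 2 * w ℓs := by
    rw [← Finset.sum_filter]
    have hb1 := hQ.1 (es ℓs)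
    have hc1 := hQ.2.1 (es ℓs)
    have : ∑ ℓ ∈ Q.filter (fun ℓ => es ℓ = es ℓs), w ℓs * (b ℓ + c ℓ)
        = w ℓs * ((∑ ℓ ∈ Q.filter (fun ℓ => es ℓ = es ℓs), b ℓ)
          + ∑ ℓ ∈ Q.filter (fun ℓ => es ℓ = es ℓs), c ℓ) := by
      rw [← Finset.sum_add_distrib, Finset.mul_sum]
    rw [this]
    nlinarith
  calc ∑ ℓ ∈ Q, decompose b c job es w ℓs ℓ
      ≤ ∑ ℓ ∈ Q, ((if job ℓ = job ℓs then w ℓs else 0) +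
        (if es ℓ = es ℓs then w ℓs * (b ℓ + c ℓ) else 0)) := Finset.sum_le_sum hpt
    _ = (∑ ℓ ∈ Q, (if job ℓ = job ℓs then w ℓs else 0)) +
        ∑ ℓ ∈ Q, (if es ℓ = es ℓs then w ℓs * (b ℓ + c ℓ) else 0) :=
        Finset.sum_add_distrib
    _ ≤ 3 * w ℓs := by linarith

/-- B2 auxiliary: if the server constraint at `es ℓs` is overloaded by `T ∪ {ℓs}`
for resource `f` (which is `b` or `c`), then the decomposed weight of `T` is
at least `w ℓs / 2`. -/
lemma half_le_sum_decompose {L J K : Type*} [DecidableEq L] [DecidableEq J] [DecidableEq K]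
    (b c f : L → ℝ) (job : L → J) (es : L → K)
    (hb : ∀ ℓ : L, 0 < b ℓ ∧ b ℓ ≤ 1) (hc : ∀ ℓ : L, 0 < c ℓ ∧ c ℓ ≤ 1)
    (hf : ∀ ℓ : L, 0 < f ℓ ∧ f ℓ ≤ 1) (hfbc : ∀ ℓ : L, f ℓ ≤ b ℓ + c ℓ)
    (w : L → ℝ) (ℓs : L) (hw : 0 < w ℓs) (T : Finset L)
    (hsum : 1 < f ℓs + ∑ ℓ ∈ T.filter (fun ℓ => es ℓ = es ℓs), f ℓ)
    (hcase : f ℓs ≤ 1 / 2 ∨ ∀ ℓ ∈ T, 1 / 2 < max (b ℓ) (c ℓ)) :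
    1 / 2 * w ℓs ≤ ∑ ℓ ∈ T, decompose b c job es w ℓs ℓ := by
  have hd0 : ∀ ℓ ∈ T, 0 ≤ decompose b c job es w ℓs ℓ := fun ℓ _ =>
    decompose_nonneg b c job es hb hc w ℓs hw.le ℓ
  set F := T.filter (fun ℓ => es ℓ = es ℓs) with hF
  rcases hcase with hlight | hheavy
  · -- light case: sum of f over F exceeds 1/2
    have h2 : 1 / 2 ≤ ∑ ℓ ∈ F, f ℓ := by linarith
    have hpt : ∀ ℓ ∈ F, f ℓ * w ℓs ≤ decompose b c job es w ℓs ℓ := by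
      intro ℓ hℓ
      have hes : es ℓ = es ℓs := (Finset.mem_filter.mp hℓ).2
      rw [mul_comm]
      unfold decompose
      split_ifs with h1
      · nlinarith [(hf ℓ).1, (hf ℓ).2]
      · exact mul_le_mul_of_nonneg_left (hfbc ℓ) hw.le
    calc 1 / 2 * w ℓs ≤ (∑ ℓ ∈ F, f ℓ) * w ℓs := by nlinarith
      _ = ∑ ℓ ∈ F, f ℓ * w ℓs := Finset.sum_mul F f (w ℓs)
      _ ≤ ∑ ℓ ∈ F, decompose b c job es w ℓs ℓ := Finset.sum_le_sum hpt
      _ ≤ ∑ ℓ ∈ T, decompose b c job es w ℓs ℓ :=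
          Finset.sum_le_sum_of_subset_of_nonneg (Finset.filter_subset _ _)
            (fun ℓ hℓ _ => hd0 ℓ hℓ)
  · -- heavy case: some heavy element shares the server
    have hFne : F.Nonempty := by
      rw [Finset.nonempty_iff_ne_empty]
      intro hemp
      rw [hemp] at hsum
      simp at hsum
      linarith [(hf ℓs).2]
    obtain ⟨ℓ, hℓF⟩ := hFne
    have hℓT : ℓ ∈ T := Finset.mem_of_mem_filter ℓ hℓF
    have hes : es ℓ = es ℓs := (Finset.mem_filter.mp hℓF).2
    have hmax := hheavy ℓ hℓT
    have hbc : 1 / 2 < b ℓ + c ℓ := by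
      rcases max_cases (b ℓ) (c ℓ) with ⟨h, _⟩ | ⟨h, _⟩ <;>
        [linarith [(hc ℓ).1]; linarith [(hb ℓ).1]]
    have hdec : 1 / 2 * w ℓs ≤ decompose b c job es w ℓs ℓ := by
      unfold decompose
      split_ifs with h1
      · linarith
      · nlinarith
    exact le_trans hdec (Finset.single_le_sum hd0 hℓT)

lemma idassign_main {L J K : Type*} [DecidableEq L] [DecidableEq J] [DecidableEq K]
    (b c : L → ℝ) (job : L → J) (es : L → K)
    (hb : ∀ ℓ : L, 0 < b ℓ ∧ b ℓ ≤ 1) (hc : ∀ ℓ : L, 0 < c ℓ ∧ c ℓ ≤ 1) :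
    ∀ (n : ℕ) (w : L → ℝ) (S : Finset L), (S.filter fun ℓ => 0 < w ℓ).card = n →
      (IDAssign b c job es w S ⊆ S.filter fun ℓ => 0 < w ℓ) ∧
      Feasible b c job es (IDAssign b c job es w S) ∧
      ∀ Q : Finset L, Feasible b c job es Q →
        ∑ ℓ ∈ Q ∩ S.filter (fun ℓ => 0 < w ℓ), w ℓ ≤
          6 * ∑ ℓ ∈ IDAssign b c job es w S, w ℓ := by
  intro n
  induction n using Nat.strong_induction_on with
  | _ n ih =>
  intro w S hn
  by_cases hS' : (S.filter fun ℓ => 0 < w ℓ).Nonempty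
  case neg =>
    rw [IDAssign_neg b c job es w S hS']
    have hL0 : S.filter (fun ℓ => 0 < w ℓ) = ∅ := Finset.not_nonempty_iff_eq_empty.mp hS'
    refine ⟨Finset.empty_subset _, ⟨fun k => by simp, fun k => by simp, fun j => by simp⟩,
      fun Q _ => ?_⟩
    rw [hL0, Finset.inter_empty]
    simp
  case pos =>
  rw [IDAssign_pos b c job es w S hS']
  set L' := S.filter (fun ℓ => 0 < w ℓ) with hL'
  set ℓs := pick b c L' hS' with hℓsdef
  set w2 : L → ℝ := fun ℓ => w ℓ - decompose b c job es w ℓs ℓ with hw2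
  set Srec := IDAssign b c job es w2 L' with hSrec
  have hℓsL' : ℓs ∈ L' := pick_mem b c L' hS'
  have hwpos : 0 < w ℓs := (Finset.mem_filter.mp hℓsL').2
  have hd0 : ∀ ℓ, 0 ≤ decompose b c job es w ℓs ℓ :=
    decompose_nonneg b c job es hb hc w ℓs hwpos.le
  have hw2s : w2 ℓs = 0 := by
    rw [hw2]
    simp [decompose]
  have hssub : L'.filter (fun ℓ => 0 < w2 ℓ) ⊂ L' := by
    rw [Finset.ssubset_iff_of_subset (Finset.filter_subset _ _)]
    exact ⟨ℓs, hℓsL', by simp [Finset.mem_filter, hw2s]⟩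
  have hcard : (L'.filter fun ℓ => 0 < w2 ℓ).card < n := hn ▸ Finset.card_lt_card hssub
  obtain ⟨hrsub, hrfeas, hrapprox⟩ := ih _ hcard w2 L' rfl
  rw [← hSrec] at hrsub hrfeas hrapprox
  have hnotin : ℓs ∉ Srec := by
    intro h
    have := (Finset.mem_filter.mp (hrsub h)).2
    rw [hw2s] at this
    exact lt_irrefl 0 this
  -- the general approximation combination step
  have happrox : ∀ Res : Finset L,
      (1 / 2 * w ℓs ≤ ∑ ℓ ∈ Res, decompose b c job es w ℓs ℓ) →
      (∑ ℓ ∈ Srec, w2 ℓ ≤ ∑ ℓ ∈ Res, w2 ℓ) →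
      ∀ Q : Finset L, Feasible b c job es Q →
        ∑ ℓ ∈ Q ∩ L', w ℓ ≤ 6 * ∑ ℓ ∈ Res, w ℓ := by
    intro Res hB2 hw2le Q hQ
    have h1 : ∑ ℓ ∈ Q ∩ L', decompose b c job es w ℓs ℓ ≤ 3 * w ℓs :=
      le_trans
        (Finset.sum_le_sum_of_subset_of_nonneg Finset.inter_subset_left
          (fun ℓ _ _ => hd0 ℓ))
        (sum_decompose_le b c job es hb hc w ℓs hwpos.le Q hQ)
    have h2 : ∑ ℓ ∈ Q ∩ L', w2 ℓ ≤ 6 * ∑ ℓ ∈ Srec, w2 ℓ := by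
      have e : Q ∩ (L'.filter fun ℓ => 0 < w2 ℓ) = (Q ∩ L').filter (fun ℓ => 0 < w2 ℓ) := by
        ext x
        simp only [Finset.mem_filter, Finset.mem_inter]
        tauto
      have h3 := hrapprox Q hQ
      rw [e] at h3
      have h4 : ∑ ℓ ∈ Q ∩ L', w2 ℓ ≤ ∑ ℓ ∈ (Q ∩ L').filter (fun ℓ => 0 < w2 ℓ), w2 ℓ := by
        rw [← Finset.sum_filter_add_sum_filter_not (Q ∩ L') (fun ℓ => 0 < w2 ℓ)]
        have h5 : ∑ ℓ ∈ (Q ∩ L').filter (fun ℓ => ¬ 0 < w2 ℓ), w2 ℓ ≤ 0 :=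
          Finset.sum_nonpos fun ℓ hℓ => le_of_not_gt (Finset.mem_filter.mp hℓ).2
        linarith
      linarith
    have hsplit : ∑ ℓ ∈ Q ∩ L', w ℓ =
        (∑ ℓ ∈ Q ∩ L', decompose b c job es w ℓs ℓ) + ∑ ℓ ∈ Q ∩ L', w2 ℓ := by
      rw [← Finset.sum_add_distrib]
      refine Finset.sum_congr rfl fun ℓ _ => ?_
      rw [hw2]
      ring
    have hres : ∑ ℓ ∈ Res, w ℓ =
        (∑ ℓ ∈ Res, decompose b c job es w ℓs ℓ) + ∑ ℓ ∈ Res, w2 ℓ := by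
      rw [← Finset.sum_add_distrib]
      refine Finset.sum_congr rfl fun ℓ _ => ?_
      rw [hw2]
      ring
    linarith
  by_cases hfeas : Feasible b c job es (insert ℓs Srec)
  case pos =>
    rw [if_pos hfeas]
    refine ⟨Finset.insert_subset hℓsL' (hrsub.trans (Finset.filter_subset _ _)), hfeas, ?_⟩
    apply happrox
    · have hmem : ℓs ∈ insert ℓs Srec := Finset.mem_insert_self _ _
      have hval : decompose b c job es w ℓs ℓs = w ℓs := by simp [decompose]
      have := Finset.single_le_sum (fun ℓ (_ : ℓ ∈ insert ℓs Srec) => hd0 ℓ) hmem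
      rw [hval] at this
      linarith
    · rw [Finset.sum_insert hnotin, hw2s]
      linarith
  case neg =>
    rw [if_neg hfeas]
    refine ⟨hrsub.trans (Finset.filter_subset _ _), hrfeas, ?_⟩
    apply happrox _ ?_ le_rfl
    -- key claim: from infeasibility of `insert ℓs Srec`
    have hheavyAll : ¬ (L'.filter fun ℓ => b ℓ ≤ 1 / 2 ∧ c ℓ ≤ 1 / 2).Nonempty →
        ∀ ℓ ∈ Srec, 1 / 2 < max (b ℓ) (c ℓ) := by
      intro hnl ℓ hℓ
      by_contra hle
      push_neg at hle
      exact hnl ⟨ℓ, Finset.mem_filter.mpr ⟨Finset.mem_of_mem_filter ℓ (hrsub hℓ),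
        le_trans (le_max_left _ _) hle, le_trans (le_max_right _ _) hle⟩⟩
    have hcaseb : b ℓs ≤ 1 / 2 ∨ ∀ ℓ ∈ Srec, 1 / 2 < max (b ℓ) (c ℓ) := by
      by_cases hlight : (L'.filter fun ℓ => b ℓ ≤ 1 / 2 ∧ c ℓ ≤ 1 / 2).Nonempty
      · exact Or.inl (pick_light b c L' hS' hlight).1
      · exact Or.inr (hheavyAll hlight)
    have hcasec : c ℓs ≤ 1 / 2 ∨ ∀ ℓ ∈ Srec, 1 / 2 < max (b ℓ) (c ℓ) := by
      by_cases hlight : (L'.filter fun ℓ => b ℓ ≤ 1 / 2 ∧ c ℓ ≤ 1 / 2).Nonempty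
      · exact Or.inl (pick_light b c L' hS' hlight).2
      · exact Or.inr (hheavyAll hlight)
    unfold Feasible at hfeas
    rw [not_and_or, not_and_or] at hfeas
    have hnot : ℓs ∉ Srec.filter (fun ℓ => es ℓ = es ℓs) :=
      fun h => hnotin (Finset.mem_of_mem_filter ℓs h)
    rcases hfeas with hA | hB | hC
    · push_neg at hA
      obtain ⟨k, hk⟩ := hA
      have hkes : es ℓs = k := by
        by_contra hne
        rw [Finset.filter_insert, if_neg hne] at hk
        exact absurd (hrfeas.1 k) (not_le.mpr hk)
      subst hkes
      rw [Finset.filter_insert, if_pos rfl, Finset.sum_insert hnot] at hk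
      exact half_le_sum_decompose b c b job es hb hc hb
        (fun ℓ => by linarith [(hc ℓ).1]) w ℓs hwpos Srec hk hcaseb
    · push_neg at hB
      obtain ⟨k, hk⟩ := hB
      have hkes : es ℓs = k := by
        by_contra hne
        rw [Finset.filter_insert, if_neg hne] at hk
        exact absurd (hrfeas.2.1 k) (not_le.mpr hk)
      subst hkes
      rw [Finset.filter_insert, if_pos rfl, Finset.sum_insert hnot] at hk
      exact half_le_sum_decompose b c c job es hb hc hc
        (fun ℓ => by linarith [(hb ℓ).1]) w ℓs hwpos Srec hk hcasec
    · push_neg at hC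
      obtain ⟨j, hj⟩ := hC
      have hjj : job ℓs = j := by
        by_contra hne
        rw [Finset.filter_insert, if_neg hne] at hj
        exact absurd (hrfeas.2.2 j) (not_le.mpr hj)
      rw [Finset.filter_insert, if_pos hjj, Finset.card_insert_of_notMem
        (fun h => hnotin (Finset.mem_of_mem_filter ℓs h))] at hj
      have hne : (Srec.filter (fun ℓ => job ℓ = j)).Nonempty := Finset.card_pos.mp (by omega)
      obtain ⟨ℓ, hℓ⟩ := hne
      have hdec : decompose b c job es w ℓs ℓ = w ℓs := by
        unfold decompose
        rw [if_pos]
        rw [(Finset.mem_filter.mp hℓ).2, hjj]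
      calc 1 / 2 * w ℓs ≤ w ℓs := by linarith
        _ = decompose b c job es w ℓs ℓ := hdec.symm
        _ ≤ ∑ ℓ ∈ Srec, decompose b c job es w ℓs ℓ :=
            Finset.single_le_sum (fun ℓ _ => hd0 ℓ) (Finset.mem_of_mem_filter ℓ hℓ)

/-- For every instance of problem P with nonnegative utilities
`u`, the set `S = IDAssign(u, L)` is a feasible subset of `L` and satisfies
`u(S) ≥ (1/6)·u(Q)` for every feasible subset `Q ⊆ L`; i.e., `IDAssign` is a
`1/6`-approximation algorithm for problem P. -/
theorem idassign_one_sixth_approx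
    {L J K : Type*} [Fintype L] [DecidableEq L] [Fintype J] [DecidableEq J]
    [Fintype K] [DecidableEq K]
    (b c : L → ℝ) (job : L → J) (es : L → K)
    (hb : ∀ ℓ : L, 0 < b ℓ ∧ b ℓ ≤ 1) (hc : ∀ ℓ : L, 0 < c ℓ ∧ c ℓ ≤ 1)
    (u : L → ℝ) (hu : ∀ ℓ : L, 0 ≤ u ℓ) :
    Feasible b c job es (IDAssign b c job es u Finset.univ) ∧
    ∀ Q : Finset L, Feasible b c job es Q →
      (1 / 6) * (∑ ℓ ∈ Q, u ℓ) ≤ ∑ ℓ ∈ IDAssign b c job es u Finset.univ, u ℓ := by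
  obtain ⟨hsub, hfeas, happ⟩ := idassign_main b c job es hb hc _ u Finset.univ rfl
  refine ⟨hfeas, fun Q hQ => ?_⟩
  have h := happ Q hQ
  have heq : ∑ ℓ ∈ Q, u ℓ = ∑ ℓ ∈ Q ∩ Finset.univ.filter (fun ℓ => 0 < u ℓ), u ℓ := by
    rw [show Q ∩ Finset.univ.filter (fun ℓ => 0 < u ℓ) = Q.filter (fun ℓ => 0 < u ℓ) by
      ext x; simp]
    rw [← Finset.sum_filter_add_sum_filter_not Q (fun ℓ => 0 < u ℓ)]
    have hz : ∑ ℓ ∈ Q.filter (fun ℓ => ¬ 0 < u ℓ), u ℓ = 0 :=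
      Finset.sum_eq_zero fun ℓ hℓ =>
        le_antisymm (le_of_not_gt (Finset.mem_filter.mp hℓ).2) (hu ℓ)
    rw [hz, add_zero]
  linarith
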